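/- arXiv:1803.00837 — 3 statements merged into one kernel-verified Lean document; each statement's English description precedes it below -/
import Mathlib

section
/- Let φ₁: A₁ → B and φ₂: A₂ → B be surjective homomorphisms of commutative rings, where A₁ and A₂ are local rings and B is a nonzero ring, and let R = A₁ ×_B A₂ be the fiber product with first projection ψ₁: R → A₁. Then the induced map on unit groups ψ₁: R^× → A₁^× is surjective. -/
/-- The fiber product `A₁ ×_B A₂` of two ring homomorphisms `φ₁ : A₁ → B` and
`φ₂ : A₂ → B`: the subring `{(a₁, a₂) ∈ A₁ × A₂ : φ₁ a₁ = φ₂ a₂}` of `A₁ × A₂`. -/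
def fiberProduct {A₁ A₂ B : Type} [CommRing A₁] [CommRing A₂] [CommRing B]
    (φ₁ : A₁ →+* B) (φ₂ : A₂ →+* B) : Subring (A₁ × A₂) where
  carrier := {p | φ₁ p.1 = φ₂ p.2}
  zero_mem' := by simp
  one_mem' := by simp
  add_mem' := by
    intro a b ha hb
    simp only [Set.mem_setOf_eq, Prod.fst_add, Prod.snd_add, map_add] at *
    rw [ha, hb]
  mul_mem' := by
    intro a b ha hb
    simp only [Set.mem_setOf_eq, Prod.fst_mul, Prod.snd_mul, map_mul] at *
    rw [ha, hb]
  neg_mem' := by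
    intro a ha
    simp only [Set.mem_setOf_eq, Prod.fst_neg, Prod.snd_neg, map_neg] at *
    rw [ha]


/-- Let `φ₁ : A₁ → B` and `φ₂ : A₂ → B` be surjective homomorphisms of commutative
rings, where `A₁` and `A₂` are local rings and `B` is a nonzero ring. Then the first
projection `ψ₁ : R → A₁` from the fiber product `R = A₁ ×_B A₂` induces a surjective
map on unit groups `Rˣ → A₁ˣ`. -/
theorem fiberProduct_units_map_surjective
    {A₁ A₂ B : Type} [CommRing A₁] [CommRing A₂] [CommRing B]
    [IsLocalRing A₁] [IsLocalRing A₂] [Nontrivial B]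
    (φ₁ : A₁ →+* B) (φ₂ : A₂ →+* B)
    (hφ₁ : Function.Surjective φ₁) (hφ₂ : Function.Surjective φ₂) :
    Function.Surjective
      (Units.map (((RingHom.fst A₁ A₂).comp (fiberProduct φ₁ φ₂).subtype) :
        (fiberProduct φ₁ φ₂) →* A₁)) := by
  intro u
  -- φ₂ is a local hom, so its units map is surjective
  have h2 : Function.Surjective (Units.map φ₂.toMonoidHom) :=
    IsLocalRing.surjective_units_map_of_local_ringHom φ₂ hφ₂
      (IsLocalHom.of_surjective φ₂ hφ₂)
  obtain ⟨u₂, hu₂⟩ := h2 (Units.map φ₁.toMonoidHom u)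
  have h1 : φ₁ (u : A₁) = φ₂ (u₂ : A₂) := congrArg Units.val hu₂.symm
  have h1' : φ₁ ((u⁻¹ : A₁ˣ) : A₁) = φ₂ ((u₂⁻¹ : A₂ˣ) : A₂) := by
    have := congrArg Units.val (congrArg (·⁻¹) hu₂.symm)
    simpa using this
  refine ⟨⟨⟨⟨(u : A₁), (u₂ : A₂)⟩, h1⟩, ⟨⟨((u⁻¹ : A₁ˣ) : A₁), ((u₂⁻¹ : A₂ˣ) : A₂)⟩, h1'⟩,
    ?_, ?_⟩, ?_⟩
  · ext <;> simp [Subring.coe_mul]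
  · ext <;> simp [Subring.coe_mul]
  · ext; rfl
end

section
/- Let φ₁: A₁ → B and φ₂: A₂ → B be homomorphisms of commutative rings, let R = A₁ ×_B A₂ be the fiber product with projections ψ₁: R → A₁ and ψ₂: R → A₂, and set I = ker(ψ₂) and J = ker(φ₁). Then ψ₁ restricts to a group isomorphism from ker(R^× → (R/I)^×) onto ker(A₁^× → (A₁/J)^×), where these kernels are the groups of units mapping to 1 in the respective quotient rings. -/
lemma mk_eq_one_iff {S : Type*} [CommRing S] (I : Ideal S) (x : S) :
    Ideal.Quotient.mk I x = 1 ↔ x - 1 ∈ I := by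
  rw [show (1 : S ⧸ I) = Ideal.Quotient.mk I 1 from (map_one _).symm, Ideal.Quotient.eq]


/-- Let `φ₁ : A₁ → B` and `φ₂ : A₂ → B` be homomorphisms of commutative rings, let
`R = A₁ ×_B A₂` be the fiber product with projections `ψ₁ : R → A₁`, `ψ₂ : R → A₂`,
and set `I = ker ψ₂`, `J = ker φ₁`. Then `ψ₁` restricts to a group isomorphism
(a bijection, compatible with multiplication since it is induced by a ring map) from
`ker(Rˣ → (R/I)ˣ)` onto `ker(A₁ˣ → (A₁/J)ˣ)`, the groups of units mapping to `1` in
the respective quotient rings. -/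
theorem fiberProduct_units_bijOn
    {A₁ A₂ B : Type} [CommRing A₁] [CommRing A₂] [CommRing B]
    (φ₁ : A₁ →+* B) (φ₂ : A₂ →+* B) :
    Set.BijOn
      (Units.map (((RingHom.fst A₁ A₂).comp (fiberProduct φ₁ φ₂).subtype) :
        (fiberProduct φ₁ φ₂) →* A₁))
      {u : (fiberProduct φ₁ φ₂)ˣ |
        Ideal.Quotient.mk
          (RingHom.ker ((RingHom.snd A₁ A₂).comp (fiberProduct φ₁ φ₂).subtype))
          (u : fiberProduct φ₁ φ₂) = 1}
      {v : A₁ˣ | Ideal.Quotient.mk (RingHom.ker φ₁) (v : A₁) = 1} := by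
  refine ⟨?_, ?_, ?_⟩
  · intro u hu
    simp only [Set.mem_setOf_eq, mk_eq_one_iff, RingHom.mem_ker, map_sub, map_one,
      sub_eq_zero] at hu ⊢
    replace hu : ((u : fiberProduct φ₁ φ₂) : A₁ × A₂).2 = 1 := hu
    have hmem : φ₁ ((u : fiberProduct φ₁ φ₂) : A₁ × A₂).1
        = φ₂ ((u : fiberProduct φ₁ φ₂) : A₁ × A₂).2 := (u : fiberProduct φ₁ φ₂).2
    show φ₁ ((u : fiberProduct φ₁ φ₂) : A₁ × A₂).1 = 1
    rw [hmem, hu, map_one]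
  · intro u hu u' hu' h
    simp only [Set.mem_setOf_eq, mk_eq_one_iff, RingHom.mem_ker, map_sub, map_one,
      sub_eq_zero] at hu hu'
    replace hu : ((u : fiberProduct φ₁ φ₂) : A₁ × A₂).2 = 1 := hu
    replace hu' : ((u' : fiberProduct φ₁ φ₂) : A₁ × A₂).2 = 1 := hu'
    have h1 : ((u : fiberProduct φ₁ φ₂) : A₁ × A₂).1
        = ((u' : fiberProduct φ₁ φ₂) : A₁ × A₂).1 := congrArg Units.val h
    exact Units.ext (Subtype.ext (Prod.ext h1 (hu.trans hu'.symm)))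
  · intro v hv
    simp only [Set.mem_setOf_eq, mk_eq_one_iff, RingHom.mem_ker, map_sub, map_one,
      sub_eq_zero] at hv
    have h2 : φ₁ (↑v⁻¹ : A₁) = 1 := by
      have := congrArg φ₁ v.mul_inv
      rw [map_mul, map_one, hv, one_mul] at this
      exact this
    refine ⟨⟨⟨(↑v, 1), by show φ₁ _ = φ₂ _; rw [hv, map_one]⟩,
      ⟨(↑v⁻¹, 1), by show φ₁ _ = φ₂ _; rw [h2, map_one]⟩, ?_, ?_⟩, ?_, ?_⟩
    · exact Subtype.ext (Prod.ext (by simp) (by simp))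
    · exact Subtype.ext (Prod.ext (by simp) (by simp))
    · simp only [Set.mem_setOf_eq, mk_eq_one_iff, RingHom.mem_ker, map_sub, map_one,
        sub_eq_zero]
      rfl
    · exact Units.ext rfl
end

section
/- Let A be a commutative Noetherian ring and let a ∈ A be a nonzerodivisor such that the quotient ring A/(a) is reduced and nonzero. Let 𝔭 be a prime ideal of A that is minimal over the principal ideal (a) (i.e. 𝔭 is a minimal element among the primes containing (a)). Then the localization A_𝔭 is a discrete valuation ring; in particular its maximal ideal 𝔭A_𝔭 is generated by the image of a. -/
/-- Let `A` be a commutative Noetherian ring and let `a ∈ A` be a nonzerodivisor such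
that the quotient ring `A/(a)` is reduced and nonzero. Let `p` be a prime ideal of `A`
that is minimal over the principal ideal `(a)`. Then the localization `A_p` is a
discrete valuation ring (a local principal ideal domain which is not a field); in
particular its maximal ideal `p A_p` is generated by the image of `a`. -/
theorem localization_dvr_of_minimal_over_regular
    {A : Type} [CommRing A] [IsNoetherianRing A] (a : A)
    (ha : a ∈ nonZeroDivisors A)
    (hred : IsReduced (A ⧸ Ideal.span ({a} : Set A)))
    (hnz : Nontrivial (A ⧸ Ideal.span ({a} : Set A)))
    (p : Ideal A) [p.IsPrime]
    (hp : p ∈ (Ideal.span ({a} : Set A)).minimalPrimes) :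
    IsDomain (Localization.AtPrime p)
      ∧ IsPrincipalIdealRing (Localization.AtPrime p)
      ∧ ¬ IsField (Localization.AtPrime p)
      ∧ IsLocalRing.maximalIdeal (Localization.AtPrime p)
          = Ideal.span {algebraMap A (Localization.AtPrime p) a} := by
  classical
  set R := Localization.AtPrime p with hR
  set f := algebraMap A R with hf
  set x : R := f a with hx
  have hrad : (Ideal.span ({a} : Set A)).IsRadical :=
    (Ideal.isRadical_iff_quotient_reduced _).mpr hred
  have hIa : Ideal.span ({a} : Set A) ≤ p := hp.1.2
  have haP : a ∈ p := hIa (Ideal.mem_span_singleton_self a)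
  haveI hNoeth : IsNoetherianRing R := IsLocalization.isNoetherianRing p.primeCompl R ‹_›
  -- map of span
  have hmap : Ideal.map f (Ideal.span ({a} : Set A)) = Ideal.span ({x} : Set R) := by
    rw [Ideal.map_span, Set.image_singleton]
  -- x is a nonzerodivisor
  have hxnzd : x ∈ nonZeroDivisors R := by
    rw [mem_nonZeroDivisors_iff_right]
    intro y hy
    obtain ⟨⟨b, s⟩, rfl⟩ := IsLocalization.mk'_surjective p.primeCompl y
    have hy' : IsLocalization.mk' R (b * a) (s * 1) = 0 := by
      rw [IsLocalization.mk'_mul, IsLocalization.mk'_one]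
      exact hy
    rw [IsLocalization.mk'_eq_zero_iff] at hy'
    obtain ⟨t, ht⟩ := hy'
    have : ((t : A) * b) * a = 0 := by linear_combination ht
    have hb : (t : A) * b = 0 := mem_nonZeroDivisors_iff_right.mp ha _ this
    rw [IsLocalization.mk'_eq_zero_iff]
    exact ⟨t, hb⟩
  -- span {x} is a radical ideal
  have hxrad : (Ideal.span ({x} : Set R)).IsRadical := by
    rw [← hmap]
    intro y hy
    obtain ⟨n, hn⟩ := hy
    rcases Nat.eq_zero_or_pos n with rfl | hnpos
    · have htop : Ideal.map f (Ideal.span ({a} : Set A)) = ⊤ :=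
        (Ideal.eq_top_iff_one _).mpr (by simpa using hn)
      rw [htop]; exact Submodule.mem_top
    obtain ⟨⟨b, s⟩, rfl⟩ := IsLocalization.mk'_surjective p.primeCompl y
    rw [← IsLocalization.mk'_pow, IsLocalization.mk'_mem_map_algebraMap_iff] at hn
    obtain ⟨t, htS, htb⟩ := hn
    have h1 : (t * b) ^ n ∈ Ideal.span ({a} : Set A) := by
      obtain ⟨m, rfl⟩ := Nat.exists_eq_succ_of_ne_zero hnpos.ne'
      have : (t * b) ^ (m + 1) = t ^ m * (t * b ^ (m + 1)) := by ring
      rw [this]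
      exact Ideal.mul_mem_left _ _ htb
    have h2 : t * b ∈ Ideal.span ({a} : Set A) := hrad ⟨n, h1⟩
    rw [IsLocalization.mk'_mem_map_algebraMap_iff]
    exact ⟨t, htS, h2⟩
  -- the maximal ideal equals span {x}
  have hmax : IsLocalRing.maximalIdeal R = Ideal.span ({x} : Set R) := by
    have hrad_eq : (Ideal.span ({x} : Set R)).radical = IsLocalRing.maximalIdeal R := by
      rw [Ideal.radical_eq_sInf]
      apply le_antisymm
      · apply sInf_le
        refine ⟨?_, (IsLocalRing.maximalIdeal.isMaximal R).isPrime⟩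
        rw [Ideal.span_le, Set.singleton_subset_iff]
        rw [← Localization.AtPrime.map_eq_maximalIdeal]
        exact Ideal.mem_map_of_mem f haP
      · apply le_sInf
        rintro q ⟨hq1, hq2⟩
        have hq0 : (Ideal.comap f q).IsPrime := hq2.comap f
        have hq0a : Ideal.span ({a} : Set A) ≤ Ideal.comap f q := by
          rw [Ideal.span_le, Set.singleton_subset_iff]
          exact Ideal.mem_comap.mpr (hq1 (Ideal.subset_span rfl))
        have hq0p : Ideal.comap f q ≤ p := by
          intro b hb
          by_contra hbp
          have hbu : IsUnit (f b) := IsLocalization.map_units R (⟨b, hbp⟩ : p.primeCompl)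
          exact hq2.ne_top (q.eq_top_of_isUnit_mem hb hbu)
        have hpq : Ideal.comap f q = p :=
          le_antisymm hq0p (hp.2 ⟨hq0, hq0a⟩ hq0p)
        have h3 : Ideal.map f p = q := by
          have h4 := IsLocalization.map_comap p.primeCompl R q
          rw [Ideal.under_def, ← hf, hpq] at h4
          exact h4
        rw [← Localization.AtPrime.map_eq_maximalIdeal, h3]
    rw [← hrad_eq, hxrad.radical]
  -- x ≠ 0
  have hxne : x ≠ 0 := fun h => one_ne_zero (mem_nonZeroDivisors_iff_right.mp hxnzd 1 (by rw [one_mul, h]))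
  -- every nonzero element is unit * x^n
  have hfact : ∀ y : R, y ≠ 0 → ∃ (n : ℕ) (u : R), IsUnit u ∧ y = u * x ^ n := by
    intro y hy
    have hbot : (⨅ n : ℕ, IsLocalRing.maximalIdeal R ^ n) = ⊥ :=
      Ideal.iInf_pow_eq_bot_of_isLocalRing _ (IsLocalRing.maximalIdeal.isMaximal R).ne_top
    have hex : ∃ n : ℕ, y ∉ IsLocalRing.maximalIdeal R ^ n := by
      by_contra h
      push_neg at h
      exact hy (by simpa [hbot] using Ideal.mem_iInf.mpr h)
    have hn := Nat.find_spec hex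
    set n := Nat.find hex with hndef
    have hn0 : n ≠ 0 := by
      intro h
      rw [h] at hn
      simp at hn
    obtain ⟨m, hm⟩ := Nat.exists_eq_succ_of_ne_zero hn0
    have hym : y ∈ IsLocalRing.maximalIdeal R ^ m := by
      by_contra h
      have hle : n ≤ m := Nat.find_le h
      omega
    rw [hmax, Ideal.span_singleton_pow, Ideal.mem_span_singleton] at hym
    obtain ⟨u, hu⟩ := hym
    refine ⟨m, u, ?_, by rw [hu, mul_comm]⟩
    by_contra hunit
    have humem : u ∈ IsLocalRing.maximalIdeal R := by
      rwa [IsLocalRing.mem_maximalIdeal, mem_nonunits_iff]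
    rw [hmax, Ideal.mem_span_singleton] at humem
    obtain ⟨v, hv⟩ := humem
    apply hn
    rw [hm, hmax, Ideal.span_singleton_pow, Ideal.mem_span_singleton]
    exact ⟨v, by rw [hu, hv, pow_succ]; ring⟩
  -- R is a domain
  haveI hnzdiv : NoZeroDivisors R := by
    constructor
    intro y z hyz
    by_contra h
    push_neg at h
    obtain ⟨hy, hz⟩ := h
    obtain ⟨n, u, hu, rfl⟩ := hfact y hy
    obtain ⟨m, v, hv, rfl⟩ := hfact z hz
    have h0 : (u * v) * x ^ (n + m) = 0 := by rw [pow_add]; linear_combination hyz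
    have hxp : x ^ (n + m) = 0 := ((hu.mul hv).mul_right_eq_zero).mp h0
    exact one_ne_zero ((mem_nonZeroDivisors_iff_right.mp (pow_mem hxnzd (n + m))) 1 (by rw [one_mul]; exact hxp))
  haveI hdom : IsDomain R := NoZeroDivisors.to_isDomain R
  refine ⟨hdom, ?_, ?_, hmax⟩
  · have h45 := (tfae_of_isNoetherianRing_of_isLocalRing_of_isDomain (R := R)).out 4 0
    exact h45.mp ⟨⟨x, hmax⟩⟩
  · intro hfield
    rw [IsLocalRing.isField_iff_maximalIdeal_eq, hmax, Ideal.span_singleton_eq_bot] at hfield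
    exact hxne hfield
end
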